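/- The set Λ_2 of points (A_r, B_r) achievable by 2-Coin-Games is the convex hull of the curve {(t², √(1-t)) : t ∈ [0,1]}, where for a depth-2 tree with root value γ and level-1 values, the achievable points are exactly convex combinations (with weight γ) of pairs of points of the form (B², √A) with (A,B) ∈ Λ_1 = {(s, 1-s) : s ∈ [0,1]}. -/

import Mathlib

open Real

open Complex Set

lemma chord {f : ℝ → ℂ} (hf : ContinuousOn f (Set.Icc 0 1)) {p : ℂ}
    (hp : p ∈ convexHull ℝ (f '' Set.Icc (0:ℝ) 1)) :
    ∃ t ∈ Set.Icc (0:ℝ) 1, ∃ u ∈ Set.Icc (0:ℝ) 1, p ∈ segment ℝ (f t) (f u) := by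
  by_contra hcon
  push_neg at hcon
  have h0 : (0:ℝ) ∈ Set.Icc (0:ℝ) 1 := ⟨le_refl _, zero_le_one⟩
  set v : ℝ → ℂ := fun t => f t - p with hvdef
  have hvne : ∀ t ∈ Set.Icc (0:ℝ) 1, v t ≠ 0 := by
    intro t ht h
    have hpf : p = f t := (sub_eq_zero.mp h).symm
    exact hcon t ht t ht (hpf ▸ left_mem_segment ℝ (f t) (f t))
  have key : ∀ t ∈ Set.Icc (0:ℝ) 1, ∀ u ∈ Set.Icc (0:ℝ) 1, v u / v t ∈ slitPlane := by
    intro t ht u hu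
    by_contra hk
    rw [mem_slitPlane_iff] at hk
    push_neg at hk
    obtain ⟨h1, h2⟩ := hk
    set r : ℝ := (v u / v t).re with hrdef
    have hz : v u / v t = (r : ℂ) := by
      apply Complex.ext
      · rfl
      · simpa using h2
    have hvu : v u = (r : ℂ) * v t := by
      rw [div_eq_iff (hvne t ht)] at hz
      rw [hz]
    have hr1 : (0:ℝ) < 1 - r := by linarith
    apply hcon t ht u hu
    refine ⟨-r / (1 - r), 1 / (1 - r), div_nonneg (by linarith) (by linarith),
      div_nonneg (by linarith) (by linarith), by field_simp; ring, ?_⟩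
    have hfu : f u - p = (r : ℂ) * (f t - p) := hvu
    have h1r : ((1 - r : ℝ) : ℂ) ≠ 0 := Complex.ofReal_ne_zero.mpr (ne_of_gt hr1)
    have h1r' : (1 : ℂ) - (r : ℂ) ≠ 0 := by
      intro h
      apply h1r
      push_cast
      linear_combination h
    have hmul : ((1 - r : ℝ) : ℂ) * (((-r / (1 - r) : ℝ) : ℂ) * f t
        + ((1 / (1 - r) : ℝ) : ℂ) * f u) = ((1 - r : ℝ) : ℂ) * p := by
      push_cast
      field_simp [h1r']
      linear_combination hfu
    have : ((-r / (1 - r) : ℝ) : ℂ) * f t + ((1 / (1 - r) : ℝ) : ℂ) * f u = p :=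
      mul_left_cancel₀ h1r hmul
    simpa [Complex.real_smul] using this
  have hvcont : ContinuousOn v (Set.Icc (0:ℝ) 1) := hf.sub continuousOn_const
  set θ : ℝ → ℝ := fun t => (v t / v 0).arg with hθdef
  have hθcont : ContinuousOn θ (Set.Icc (0:ℝ) 1) := by
    have hcomp : ContinuousOn (Complex.arg ∘ fun t => v t / v 0) (Set.Icc (0:ℝ) 1) := by
      intro t ht
      have hdiv : ContinuousWithinAt (fun t => v t / v 0) (Set.Icc (0:ℝ) 1) t :=
        (hvcont t ht).div continuousWithinAt_const (hvne 0 h0)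
      exact ContinuousAt.comp_continuousWithinAt (Complex.continuousAt_arg (key 0 h0 t ht)) hdiv
    exact hcomp
  obtain ⟨tM, htM, hM⟩ := isCompact_Icc.exists_isMaxOn (⟨0, h0⟩ : (Set.Icc (0:ℝ) 1).Nonempty) hθcont
  obtain ⟨tm, htm, hm⟩ := isCompact_Icc.exists_isMinOn (⟨0, h0⟩ : (Set.Icc (0:ℝ) 1).Nonempty) hθcont
  set M := θ tM with hMdef
  set m := θ tm with hmdef
  have hmle : ∀ t ∈ Set.Icc (0:ℝ) 1, m ≤ θ t ∧ θ t ≤ M := fun t ht => ⟨hm ht, hM ht⟩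
  -- rule out M - m ≥ π
  have hlt : M - m < Real.pi := by
    by_contra hge
    push_neg at hge
    have huIcc : Set.uIcc tm tM ⊆ Set.Icc (0:ℝ) 1 := Set.uIcc_subset_Icc htm htM
    have hmem : m + Real.pi ∈ Set.uIcc (θ tm) (θ tM) := by
      rw [Set.mem_uIcc]
      left
      constructor
      · linarith [Real.pi_pos]
      · linarith
    obtain ⟨t₁, ht₁u, ht₁⟩ := intermediate_value_uIcc (hθcont.mono huIcc) hmem
    have ht₁I : t₁ ∈ Set.Icc (0:ℝ) 1 := huIcc ht₁u
    -- v t₁ / v tm is a nonpositive real: contradiction with key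
    have hzne : v tm / v 0 ≠ 0 := div_ne_zero (hvne tm htm) (hvne 0 h0)
    have hwne : v t₁ / v 0 ≠ 0 := div_ne_zero (hvne t₁ ht₁I) (hvne 0 h0)
    set a₁ : ℝ := ‖v t₁ / v 0‖ with ha₁
    set a₂ : ℝ := ‖v tm / v 0‖ with ha₂
    have hw : (v t₁ / v 0) = (a₁ : ℂ) * Complex.exp ((θ t₁ : ℝ) * Complex.I) :=
      (Complex.norm_mul_exp_arg_mul_I _).symm
    have hzz : (v tm / v 0) = (a₂ : ℂ) * Complex.exp ((m : ℝ) * Complex.I) :=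
      (Complex.norm_mul_exp_arg_mul_I _).symm
    have hquot : v t₁ / v tm = -((a₁ / a₂ : ℝ) : ℂ) := by
      have heq : v t₁ / v 0 / (v tm / v 0) = v t₁ / v tm := by
        rw [div_div_div_eq, mul_comm (v 0), ← div_div_div_eq, div_self (hvne 0 h0), div_one]
      rw [← heq, hw, hzz, ht₁, mul_div_mul_comm, ← Complex.exp_sub]
      rw [show ((m + Real.pi : ℝ) : ℂ) * Complex.I - (m : ℝ) * Complex.I
          = (Real.pi : ℂ) * Complex.I by push_cast; ring]
      rw [Complex.exp_pi_mul_I]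
      push_cast
      ring
    have hxpos : 0 < a₁ / a₂ :=
      div_pos (norm_pos_iff.mpr hwne) (norm_pos_iff.mpr hzne)
    have hmem' := key tm htm t₁ ht₁I
    rw [hquot, mem_slitPlane_iff] at hmem'
    simp only [Complex.neg_re, Complex.ofReal_re, Complex.neg_im, Complex.ofReal_im,
      neg_zero, ne_eq] at hmem'
    rcases hmem' with h | h
    · linarith
    · simp at h
  -- separation
  set c : ℝ := (m + M) / 2 with hcdef
  have hcos : ∀ t ∈ Set.Icc (0:ℝ) 1, 0 < Real.cos (θ t - c) := by
    intro t ht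
    apply Real.cos_pos_of_mem_Ioo
    constructor
    · have := (hmle t ht).1; simp only [hcdef]; nlinarith [Real.pi_pos]
    · have := (hmle t ht).2; simp only [hcdef]; nlinarith [Real.pi_pos]
  set w₀ : ℂ := Complex.exp (-(c : ℝ) * Complex.I) * (starRingEnd ℂ) (v 0) with hw₀
  set L : ℂ → ℝ := fun z => (z * w₀).re with hLdef
  have hLlin : IsLinearMap ℝ L := by
    constructor
    · intro a b; simp [hLdef, add_mul]; ring
    · intro a z; simp [hLdef, smul_mul_assoc, Complex.smul_re]; ring
  have hLpos : ∀ t ∈ Set.Icc (0:ℝ) 1, 0 < L (v t) := by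
    intro t ht
    have hvt : v t = (v t / v 0) * v 0 := (div_mul_cancel₀ (v t) (hvne 0 h0)).symm
    have hpol : (v t / v 0) = (‖v t / v 0‖ : ℂ) * Complex.exp ((θ t : ℝ) * Complex.I) :=
      (Complex.norm_mul_exp_arg_mul_I _).symm
    have hcalc : v t * w₀ =
        ((‖v t / v 0‖ * Complex.normSq (v 0) : ℝ) : ℂ)
          * Complex.exp (((θ t - c : ℝ)) * Complex.I) := by
      rw [hw₀]
      conv_lhs => rw [hvt, hpol]
      rw [show (((θ t - c : ℝ)) : ℂ) * Complex.I = (θ t : ℝ) * Complex.I + (-(c:ℝ)) * Complex.I by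
        push_cast; ring]
      rw [Complex.exp_add]
      have : v 0 * (starRingEnd ℂ) (v 0) = (Complex.normSq (v 0) : ℂ) := Complex.mul_conj _
      push_cast
      linear_combination (‖v t / v 0‖ : ℂ) * Complex.exp ((θ t :ℝ) * Complex.I)
        * Complex.exp (-(c:ℝ) * Complex.I) * this
    have : L (v t) = (‖v t / v 0‖ * Complex.normSq (v 0)) * Real.cos (θ t - c) := by
      rw [hLdef]
      simp only [hcalc]
      rw [Complex.re_ofReal_mul, Complex.exp_ofReal_mul_I_re]
    rw [this]
    have h1 : 0 < ‖v t / v 0‖ :=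
      norm_pos_iff.mpr (div_ne_zero (hvne t ht) (hvne 0 h0))
    have h2 : 0 < Complex.normSq (v 0) := Complex.normSq_pos.mpr (hvne 0 h0)
    have h3 := hcos t ht
    positivity
  -- conclude
  have hLcont : Continuous L := Complex.continuous_re.comp (continuous_id.mul continuous_const)
  have hK : IsCompact (f '' Set.Icc (0:ℝ) 1) := isCompact_Icc.image_of_continuousOn hf
  obtain ⟨x₀, hx₀, hmin⟩ := hK.exists_isMinOn ⟨f 0, Set.mem_image_of_mem f h0⟩
    hLcont.continuousOn
  have hhalf : Convex ℝ {z : ℂ | L x₀ ≤ L z} := convex_halfSpace_ge hLlin _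
  have hsub : f '' Set.Icc (0:ℝ) 1 ⊆ {z : ℂ | L x₀ ≤ L z} := fun x hx => hmin hx
  have hple : L x₀ ≤ L p := convexHull_min hsub hhalf hp
  obtain ⟨t₀, ht₀, rfl⟩ := hx₀
  have := hLpos t₀ ht₀
  have hveq : L (v t₀) = L (f t₀) - L p := by
    rw [hvdef]; exact hLlin.map_sub _ _
  linarith [hple, hveq ▸ this]

theorem stmt_18
    (Λ₁ : Set (ℝ × ℝ))
    (hΛ₁ : Λ₁ = {p : ℝ × ℝ | ∃ s ∈ Set.Icc (0:ℝ) 1, p = (s, 1 - s)})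
    (Λ₂ : Set (ℝ × ℝ))
    (hΛ₂ : Λ₂ = {p : ℝ × ℝ | ∃ γ ∈ Set.Icc (0:ℝ) 1, ∃ q ∈ Λ₁, ∃ q' ∈ Λ₁,
      p = (γ * q.2 ^ 2 + (1 - γ) * q'.2 ^ 2,
           γ * Real.sqrt q.1 + (1 - γ) * Real.sqrt q'.1)}) :
    Λ₂ = convexHull ℝ {p : ℝ × ℝ | ∃ t ∈ Set.Icc (0:ℝ) 1, p = (t ^ 2, Real.sqrt (1 - t))} := by
  subst hΛ₁ hΛ₂
  set C : Set (ℝ × ℝ) := {p : ℝ × ℝ | ∃ t ∈ Set.Icc (0:ℝ) 1, p = (t ^ 2, Real.sqrt (1 - t))}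
    with hC
  ext p
  simp only [Set.mem_setOf_eq]
  constructor
  · rintro ⟨γ, hγ, q, ⟨s, hs, rfl⟩, q', ⟨s', hs', rfl⟩, rfl⟩
    have hx : ((1 - s) ^ 2, Real.sqrt s) ∈ C := by
      refine ⟨1 - s, ⟨by linarith [hs.2], by linarith [hs.1]⟩, ?_⟩
      rw [show (1:ℝ) - (1 - s) = s by ring]
    have hx' : ((1 - s') ^ 2, Real.sqrt s') ∈ C := by
      refine ⟨1 - s', ⟨by linarith [hs'.2], by linarith [hs'.1]⟩, ?_⟩
      rw [show (1:ℝ) - (1 - s') = s' by ring]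
    have hmem := (convex_convexHull ℝ C) (subset_convexHull ℝ C hx) (subset_convexHull ℝ C hx')
      hγ.1 (by linarith [hγ.2] : (0:ℝ) ≤ 1 - γ) (by ring)
    convert hmem using 1
    ext <;> simp
  · intro hp
    set F : ℝ → ℝ × ℝ := fun t => (t ^ 2, Real.sqrt (1 - t)) with hF
    have hCset : C = F '' Set.Icc (0:ℝ) 1 := by
      ext x
      simp only [hC, hF, Set.mem_setOf_eq, Set.mem_image]
      constructor
      · rintro ⟨t, ht, rfl⟩; exact ⟨t, ht, rfl⟩
      · rintro ⟨t, ht, rfl⟩; exact ⟨t, ht, rfl⟩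
    rw [hCset] at hp
    set ι : (ℝ × ℝ) →ₗ[ℝ] ℂ := Complex.equivRealProdLm.symm.toLinearMap with hι
    have hιp : ι p ∈ convexHull ℝ ((fun t => ι (F t)) '' Set.Icc (0:ℝ) 1) := by
      rw [show ((fun t => ι (F t)) '' Set.Icc (0:ℝ) 1) = ι '' (F '' Set.Icc (0:ℝ) 1) by
        rw [Set.image_image]]
      rw [← ι.image_convexHull]
      exact Set.mem_image_of_mem _ hp
    have hcont : ContinuousOn (fun t => ι (F t)) (Set.Icc (0:ℝ) 1) := by
      apply Continuous.comp_continuousOn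
      · exact Complex.equivRealProdLm.symm.toLinearMap.continuous_of_finiteDimensional
      · apply ContinuousOn.prodMk
        · exact (continuous_pow 2).continuousOn
        · exact (Real.continuous_sqrt.comp (continuous_const.sub continuous_id)).continuousOn
    obtain ⟨t, ht, u, hu, a, b, ha, hb, hab, hseg⟩ := chord hcont hιp
    have hιeq : ι (a • F t + b • F u) = ι p := by
      rw [map_add, map_smul, map_smul]; exact hseg
    have hpeq : p = a • F t + b • F u :=
      (Complex.equivRealProdLm.symm.injective hιeq).symm
    refine ⟨a, ⟨ha, by linarith⟩, (1 - t, t), ⟨1 - t, ⟨by linarith [ht.2], by linarith [ht.1]⟩,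
      by simp⟩, (1 - u, u), ⟨1 - u, ⟨by linarith [hu.2], by linarith [hu.1]⟩, by simp⟩, ?_⟩
    have hb' : b = 1 - a := by linarith
    rw [hpeq, hb']
    simp [hF, Prod.ext_iff, Prod.smul_def, smul_eq_mul]
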